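/- For every positive integer $n$, the $n\times n$ real symmetric matrix $M_n$ with entries $M_n(j,k) = \frac{1}{\sqrt{2\pi}}\,\frac{\Gamma(j+k-3/2)}{\sqrt{\Gamma(2j-1)\Gamma(2k-1)}}$ for $1\le j,k\le n$ is positive definite, i.e. for every nonzero vector $v \in \mathbb{R}^n$ one has $\langle v, M_n v\rangle > 0$. -/

import Mathlib

open MeasureTheory Real Set Finset

/-- The `n × n` real symmetric matrix with entries
`M_n(j,k) = Γ(j+k-3/2) / (√(2π) √(Γ(2j-1) Γ(2k-1)))` for `1 ≤ j,k ≤ n`. -/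
noncomputable def ginibreM (n : ℕ) : Matrix (Fin n) (Fin n) ℝ :=
  Matrix.of fun j k =>
    (1 / Real.sqrt (2 * Real.pi)) *
      Real.Gamma (((j : ℕ) + 1 : ℝ) + ((k : ℕ) + 1 : ℝ) - 3 / 2) /
        Real.sqrt (Real.Gamma (2 * ((j : ℕ) + 1 : ℝ) - 1) *
          Real.Gamma (2 * ((k : ℕ) + 1 : ℝ) - 1))

/-- The normalizing constant. -/
noncomputable def gGc (j : ℕ) : ℝ :=
  (2 * Real.pi) ^ (-(1 : ℝ)/4) / Real.sqrt (Real.Gamma (2 * ((j : ℕ) + 1 : ℝ) - 1))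

/-- The function whose Gram matrix in `L²(0,∞)` is `ginibreM`. -/
noncomputable def gPhi (j : ℕ) (x : ℝ) : ℝ :=
  gGc j * x ^ ((j : ℝ) - 1/4) * Real.exp (-x/2)

lemma gGamma_pos (j : ℕ) : 0 < Real.Gamma (2 * ((j : ℕ) + 1 : ℝ) - 1) := by
  apply Real.Gamma_pos_of_pos
  have : (0:ℝ) ≤ (j : ℝ) := Nat.cast_nonneg j
  linarith

lemma gGc_pos (j : ℕ) : 0 < gGc j := by
  unfold gGc
  have h1 : (0:ℝ) < (2 * Real.pi) ^ (-(1 : ℝ)/4) :=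
    Real.rpow_pos_of_pos (by positivity) _
  exact div_pos h1 (Real.sqrt_pos.2 (gGamma_pos j))

lemma gPhi_mul (j k : ℕ) {x : ℝ} (hx : x ∈ Ioi (0:ℝ)) :
    gPhi j x * gPhi k x =
      (gGc j * gGc k) * (Real.exp (-x) * x ^ (((j : ℝ) + (k : ℝ) + 1/2) - 1)) := by
  have hx' : (0:ℝ) < x := hx
  have h1 : x ^ ((j : ℝ) - 1/4) * x ^ ((k : ℝ) - 1/4)
      = x ^ (((j : ℝ) + (k : ℝ) + 1/2) - 1) := by
    rw [← Real.rpow_add hx']; ring_nf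
  have h2 : Real.exp (-x/2) * Real.exp (-x/2) = Real.exp (-x) := by
    rw [← Real.exp_add]; ring_nf
  calc gPhi j x * gPhi k x
      = gGc j * gGc k * ((x ^ ((j : ℝ) - 1/4) * x ^ ((k : ℝ) - 1/4)) *
        (Real.exp (-x/2) * Real.exp (-x/2))) := by unfold gPhi; ring
    _ = _ := by rw [h1, h2]; ring

lemma gs_pos (j k : ℕ) : (0:ℝ) < (j : ℝ) + (k : ℝ) + 1/2 := by positivity

lemma gPhi_integrable (j k : ℕ) :
    IntegrableOn (fun x => gPhi j x * gPhi k x) (Ioi 0) := by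
  have h : IntegrableOn
      (fun x => (gGc j * gGc k) * (Real.exp (-x) * x ^ (((j : ℝ) + (k : ℝ) + 1/2) - 1)))
      (Ioi 0) := (Real.GammaIntegral_convergent (gs_pos j k)).const_mul _
  exact h.congr_fun (fun x hx => (gPhi_mul j k hx).symm) measurableSet_Ioi

lemma ginibre_entry {n : ℕ} (j k : Fin n) :
    ginibreM n j k = ∫ x in Ioi 0, gPhi (j : ℕ) x * gPhi (k : ℕ) x := by
  rw [MeasureTheory.setIntegral_congr_fun measurableSet_Ioi (fun x hx => gPhi_mul j k hx),
    MeasureTheory.integral_const_mul, ← Real.Gamma_eq_integral (gs_pos (j:ℕ) (k:ℕ))]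
  unfold ginibreM gGc
  have h2pi : ((2*Real.pi) ^ (-(1:ℝ)/4)) * ((2*Real.pi) ^ (-(1:ℝ)/4))
      = 1 / Real.sqrt (2*Real.pi) := by
    rw [← Real.rpow_add (by positivity), Real.sqrt_eq_rpow, one_div,
      ← Real.rpow_neg (by positivity)]
    norm_num
  have harg : ((j : ℕ) + 1 : ℝ) + ((k : ℕ) + 1 : ℝ) - 3 / 2
      = ((j : ℕ) : ℝ) + ((k : ℕ) : ℝ) + 1/2 := by push_cast; ring
  have hmul : Real.sqrt (Real.Gamma (2 * ((j : ℕ) + 1 : ℝ) - 1) *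
      Real.Gamma (2 * ((k : ℕ) + 1 : ℝ) - 1))
      = Real.sqrt (Real.Gamma (2 * ((j : ℕ) + 1 : ℝ) - 1)) *
        Real.sqrt (Real.Gamma (2 * ((k : ℕ) + 1 : ℝ) - 1)) :=
    Real.sqrt_mul (le_of_lt (gGamma_pos j)) _
  simp only [Matrix.of_apply]
  rw [harg, hmul]
  have hsj : (0:ℝ) < Real.sqrt (Real.Gamma (2 * ((j : ℕ) + 1 : ℝ) - 1)) :=
    Real.sqrt_pos.2 (gGamma_pos j)
  have hsk : (0:ℝ) < Real.sqrt (Real.Gamma (2 * ((k : ℕ) + 1 : ℝ) - 1)) :=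
    Real.sqrt_pos.2 (gGamma_pos k)
  have hsp : (0:ℝ) < Real.sqrt (2 * Real.pi) :=
    Real.sqrt_pos.2 (by positivity)
  rw [div_mul_div_comm, h2pi]
  ring

theorem stmt3 (n : ℕ) (hn : 0 < n) :
    ∀ v : Fin n → ℝ, v ≠ 0 → 0 < dotProduct v ((ginibreM n).mulVec v) := by
  intro v hv
  set F : ℝ → ℝ := fun x => ∑ j : Fin n, v j * gPhi (j : ℕ) x with hF
  have hterm_int : ∀ (j k : Fin n),
      IntegrableOn (fun x => (v j * gPhi (j:ℕ) x) * (v k * gPhi (k:ℕ) x)) (Ioi 0) := by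
    intro j k
    have h : IntegrableOn (fun x => (v j * v k) * (gPhi (j:ℕ) x * gPhi (k:ℕ) x)) (Ioi 0) :=
      (gPhi_integrable (j:ℕ) (k:ℕ)).const_mul _
    exact h.congr_fun (fun x _ => by ring) measurableSet_Ioi
  have hFsq_eq : (fun x => F x ^ 2)
      = fun x => ∑ j : Fin n, ∑ k : Fin n,
          (v j * gPhi (j:ℕ) x) * (v k * gPhi (k:ℕ) x) := by
    funext x
    rw [hF, sq, Finset.sum_mul_sum]
  have hFsq_int : IntegrableOn (fun x => F x ^ 2) (Ioi 0) := by
    rw [hFsq_eq]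
    exact integrable_finset_sum _ fun j _ => integrable_finset_sum _ fun k _ => hterm_int j k
  have key : dotProduct v ((ginibreM n).mulVec v) = ∫ x in Ioi 0, F x ^ 2 := by
    rw [dotProduct]
    simp only [Matrix.mulVec, dotProduct]
    have step1 : ∀ j : Fin n, v j * (∑ k : Fin n, ginibreM n j k * v k)
        = ∫ x in Ioi 0, ∑ k : Fin n, (v j * gPhi (j:ℕ) x) * (v k * gPhi (k:ℕ) x) := by
      intro j
      rw [MeasureTheory.integral_finset_sum _ (fun k _ => hterm_int j k), Finset.mul_sum]
      refine Finset.sum_congr rfl fun k _ => ?_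
      rw [ginibre_entry j k]
      have : (fun x => (v j * gPhi (j:ℕ) x) * (v k * gPhi (k:ℕ) x))
          = fun x => (v j * v k) * (gPhi (j:ℕ) x * gPhi (k:ℕ) x) := by
        funext x; ring
      rw [this, MeasureTheory.integral_const_mul]
      ring
    calc (∑ j : Fin n, v j * ∑ k : Fin n, ginibreM n j k * v k)
        = ∑ j : Fin n, ∫ x in Ioi 0,
            ∑ k : Fin n, (v j * gPhi (j:ℕ) x) * (v k * gPhi (k:ℕ) x) := by
          exact Finset.sum_congr rfl fun j _ => step1 j
      _ = ∫ x in Ioi 0, ∑ j : Fin n, ∑ k : Fin n,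
            (v j * gPhi (j:ℕ) x) * (v k * gPhi (k:ℕ) x) := by
          rw [MeasureTheory.integral_finset_sum _
            (fun j _ => integrable_finset_sum _ fun k _ => hterm_int j k)]
      _ = ∫ x in Ioi 0, F x ^ 2 := by rw [hFsq_eq]
  rw [key]
  -- the polynomial whose evaluation controls `F`
  set p : Polynomial ℝ := ∑ j : Fin n, Polynomial.C (v j * gGc (j:ℕ)) * Polynomial.X ^ (j:ℕ)
    with hp_def
  obtain ⟨j0, hj0⟩ : ∃ j, v j ≠ 0 := Function.ne_iff.mp hv
  have hp_coeff : p.coeff (j0:ℕ) = v j0 * gGc (j0:ℕ) := by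
    rw [hp_def, Polynomial.finset_sum_coeff]
    rw [Finset.sum_eq_single j0]
    · simp [mul_assoc, Polynomial.coeff_C_mul, Polynomial.coeff_X_pow]
    · intro k _ hk
      have h : ((j0:ℕ) : ℕ) ≠ (k:ℕ) := fun h => hk (Fin.ext h.symm)
      simp [mul_assoc, Polynomial.coeff_C_mul, Polynomial.coeff_X_pow, h]
    · simp
  have hp_ne : p ≠ 0 := fun h => by
    rw [h, Polynomial.coeff_zero] at hp_coeff
    exact hj0 (by
      have := (gGc_pos (j0:ℕ)).ne'
      rcases mul_eq_zero.mp hp_coeff.symm with h1 | h2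
      · exact h1
      · exact absurd h2 this)
  obtain ⟨B0, hB0⟩ := p.exists_max_root hp_ne
  set B : ℝ := max B0 0 with hB
  have hFeval : ∀ x : ℝ, 0 < x →
      F x = Real.exp (-x/2) * x ^ (-(1/4) : ℝ) * p.eval x := by
    intro x hx
    rw [hp_def, Polynomial.eval_finset_sum]
    simp only [Polynomial.eval_mul, Polynomial.eval_C, Polynomial.eval_pow, Polynomial.eval_X]
    rw [hF, Finset.mul_sum]
    refine Finset.sum_congr rfl fun j _ => ?_
    have hx4 : x ^ (((j:ℕ) : ℝ) - 1/4) = x ^ ((j:ℕ)) * x ^ (-(1/4) : ℝ) := by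
      rw [show (((j:ℕ) : ℝ) - 1/4) = ((j:ℕ) : ℝ) + (-(1/4):ℝ) by ring,
        Real.rpow_add hx, Real.rpow_natCast]
    simp only [gPhi]
    rw [hx4]
    ring
  have hFne : ∀ x : ℝ, B < x → F x ≠ 0 := by
    intro x hxB
    have hx0 : 0 < x := lt_of_le_of_lt (le_max_right _ _) hxB
    rw [hFeval x hx0]
    have h1 : Real.exp (-x/2) ≠ 0 := (Real.exp_pos _).ne'
    have h2 : x ^ (-(1/4) : ℝ) ≠ 0 := (Real.rpow_pos_of_pos hx0 _).ne'
    have h3 : p.eval x ≠ 0 := by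
      intro h
      have := hB0 x h
      have : x ≤ B := le_trans this (le_max_left _ _)
      linarith
    exact mul_ne_zero (mul_ne_zero h1 h2) h3
  -- continuity of F on positive reals
  have hFcont : ContinuousOn F (Ioi 0) := by
    rw [hF]
    apply continuousOn_finset_sum
    intro j _
    apply ContinuousOn.mul continuousOn_const
    apply ContinuousOn.mul
    · apply ContinuousOn.mul continuousOn_const
      exact fun x hx => (Real.continuousAt_rpow_const x _
        (Or.inl (ne_of_gt hx))).continuousWithinAt
    · exact (Real.continuous_exp.comp (by continuity)).continuousOn
  have hB1 : (0:ℝ) < B + 1 := by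
    have : (0:ℝ) ≤ B := le_max_right _ _
    linarith
  have hsub : Icc (B+1) (B+2) ⊆ Ioi 0 := fun x hx => lt_of_lt_of_le hB1 hx.1
  have hIcont : ContinuousOn (fun x => F x ^ 2) (Icc (B+1) (B+2)) :=
    ((hFcont.mono hsub).pow 2)
  have hIint : IntervalIntegrable (fun x => F x ^ 2) volume (B+1) (B+2) := by
    apply ContinuousOn.intervalIntegrable
    rwa [Set.uIcc_of_le (by linarith)]
  have hpos : 0 < ∫ x in (B+1)..(B+2), F x ^ 2 := by
    apply intervalIntegral.intervalIntegral_pos_of_pos_on hIint _ (by linarith)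
    intro x hx
    exact pow_two_pos_of_ne_zero (hFne x (by linarith [hx.1]))
  have heqI : ∫ x in (B+1)..(B+2), F x ^ 2 = ∫ x in Ioc (B+1) (B+2), F x ^ 2 :=
    intervalIntegral.integral_of_le (by linarith)
  have hmono : (∫ x in Ioc (B+1) (B+2), F x ^ 2) ≤ ∫ x in Ioi 0, F x ^ 2 := by
    apply setIntegral_mono_set hFsq_int
    · exact Filter.Eventually.of_forall fun x => sq_nonneg _
    · exact Filter.Eventually.of_forall fun x hx => lt_of_lt_of_le hB1 hx.1.le
  linarith [hpos, heqI ▸ hpos, hmono]
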